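/- Let G be a connected undirected graph on [n], let P be an all-pairs set of paths for G, and let L≥2 be an integer. For every x∈{1}×[n]^L and every vertex v∈[n] that does not appear in the staircase S_x, the vertex v is not a local minimum of f_x; i.e., v has a neighbor u in G with f_x(u)<f_x(v). -/

import Mathlib

open Finset

/-- An all-pairs set of simple paths in `G`, with `P^{u,u}` the trivial path. -/
structure PathSystem {n : ℕ} (G : SimpleGraph (Fin n)) where
  path : ∀ u v : Fin n, G.Walk u v
  isPath : ∀ u v : Fin n, (path u v).IsPath
  diag : ∀ u : Fin n, path u u = SimpleGraph.Walk.nil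

/-- Vertex congestion of a path system: max over vertices of total occurrences. -/
def PathSystem.congestion {n : ℕ} {G : SimpleGraph (Fin n)} (P : PathSystem G) : ℕ :=
  Finset.univ.sup fun w : Fin n =>
    ∑ u : Fin n, ∑ v : Fin n, (P.path u v).support.count w

/-- Support of the `i`-th quasi-segment `P^{x_i, x_{i+1}}` (0-based). -/
def segSupport {n L : ℕ} {G : SimpleGraph (Fin n)} (P : PathSystem G)
    (x : Fin (L + 1) → Fin n) (i : ℕ) : List (Fin n) :=
  (P.path (x ⟨min i L, by omega⟩) (x ⟨min (i + 1) L, by omega⟩)).support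

/-- Support of the staircase walk `P^{x_j,x_{j+1}} ∘ ⋯ ∘ P^{x_{L-1},x_L}` (0-based `j`). -/
def stairSupportFrom {n L : ℕ} {G : SimpleGraph (Fin n)} (P : PathSystem G)
    (x : Fin (L + 1) → Fin n) (j : ℕ) : List (Fin n) :=
  x ⟨min j L, by omega⟩ ::
    (List.ofFn fun k : Fin (L - j) =>
      (P.path (x ⟨j + k, by have := k.isLt; omega⟩)
              (x ⟨j + k + 1, by have := k.isLt; omega⟩)).support.tail).flatten

/-- `Tail(j, S_x)` (0-based `j`): the staircase from `x_j` with the first occurrence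
of `x_j` removed. -/
def tailSupport {n L : ℕ} {G : SimpleGraph (Fin n)} (P : PathSystem G)
    (x : Fin (L + 1) → Fin n) (j : ℕ) : List (Fin n) :=
  (stairSupportFrom P x j).erase (x ⟨min j L, by omega⟩)

/-- Largest 0-based index `i` such that the prefixes `x_0 … x_i` and `y_0 … y_i` agree
(`J_{x,y} - 1` in 1-based notation). -/
def J0 {n L : ℕ} (x y : Fin (L + 1) → Fin n) : ℕ :=
  (Finset.univ.filter fun i : Fin (L + 1) => ∀ k ≤ i, x k = y k).sup fun i => (i : ℕ)

/-- `q_v(u)`: the number of paths in `P` starting at `u` that contain `v`. -/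
def qcount {n : ℕ} {G : SimpleGraph (Fin n)} (P : PathSystem G) (v u : Fin n) : ℕ :=
  (Finset.univ.filter fun w : Fin n => v ∈ (P.path u w).support).card

/-- Largest 0-based index `i` with `v ∈ P^{x_i,x_{i+1}}`. -/
def maxSegIdx {n L : ℕ} {G : SimpleGraph (Fin n)} (P : PathSystem G)
    (x : Fin (L + 1) → Fin n) (v : Fin n) : ℕ :=
  ((Finset.range L).filter fun i => v ∈ segSupport P x i).sup id

/-- The function `f_x`. -/
noncomputable def fS {n L : ℕ} {G : SimpleGraph (Fin n)} (P : PathSystem G)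
    (x : Fin (L + 1) → Fin n) (v : Fin n) : ℤ :=
  if v ∈ stairSupportFrom P x 0 then
    -(((maxSegIdx P x v : ℤ) + 1) * n) - (((segSupport P x (maxSegIdx P x v)).idxOf v : ℤ) + 1)
  else (G.dist v (x 0) : ℤ)

/-- The function `g_{x,b}`. -/
noncomputable def gS {n L : ℕ} {G : SimpleGraph (Fin n)} (P : PathSystem G)
    (x : Fin (L + 1) → Fin n) (b : ℤ) (v : Fin n) : ℤ × ℤ :=
  if v = x (Fin.last L) then (fS P x v, b) else (fS P x v, -1)

/-- The relation `r*`. -/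
noncomputable def rstar {n L : ℕ} (x y : Fin (L + 1) → Fin n) (b1 b2 : ℤ) : ℝ :=
  if b1 = b2 ∨ ¬ Function.Injective x ∨ ¬ Function.Injective y then 0
  else (n : ℝ) ^ (J0 x y + 1)

/-- The relation `r`. -/
noncomputable def rrel {n L : ℕ} (x y : Fin (L + 1) → Fin n) (b1 b2 : ℤ) : ℝ :=
  if x = y then 0 else rstar x y b1 b2

/-- The relation `r'`. -/
noncomputable def rprime {n L : ℕ} {G : SimpleGraph (Fin n)} (P : PathSystem G) (g : ℕ)
    (x y : Fin (L + 1) → Fin n) (b1 b2 : ℤ) (v : Fin n) : ℝ :=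
  if gS P x b1 v = gS P y b2 v ∨ b1 = b2 then 0
  else if v ∈ tailSupport P x (J0 x y) ∧ v ∉ tailSupport P y (J0 x y) then
    rrel x y b1 b2 * g / (n : ℝ) ^ (1.5 : ℝ)
  else if v ∈ tailSupport P y (J0 x y) ∧ v ∉ tailSupport P x (J0 x y) then
    rrel x y b1 b2 * (n : ℝ) ^ (1.5 : ℝ) / g
  else rrel x y b1 b2

/-- The vertex congestion of the graph `G`. -/
noncomputable def vertexCongestion {n : ℕ} (G : SimpleGraph (Fin n)) : ℕ :=
  sInf {c | ∃ P : PathSystem G, P.congestion = c}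

/-- The number of cut edges `|E(S, V∖S)|`. -/
def cutEdges {n : ℕ} (G : SimpleGraph (Fin n)) [DecidableRel G.Adj]
    (S : Finset (Fin n)) : ℕ :=
  ((S ×ˢ Sᶜ).filter fun p => G.Adj p.1 p.2).card


theorem stmt8 {n L : ℕ} (hn : 2 ≤ n) (hL : 2 ≤ L)
    (G : SimpleGraph (Fin n)) (hG : G.Connected) (P : PathSystem G)
    (x : Fin (L + 1) → Fin n) (hx1 : x 0 = ⟨0, by omega⟩)
    (v : Fin n) (hv : v ∉ stairSupportFrom P x 0) :
    ∃ u : Fin n, G.Adj u v ∧ fS P x u < fS P x v := by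
  have hx0mem : x 0 ∈ stairSupportFrom P x 0 := by
    have : x (⟨min 0 L, by omega⟩ : Fin (L+1)) = x 0 := by
      congr 1
    rw [stairSupportFrom, this]
    exact List.mem_cons_self
  have hne : v ≠ x 0 := fun h => hv (h ▸ hx0mem)
  have hreach : G.Reachable v (x 0) := hG.preconnected v (x 0)
  have hdpos : 0 < G.dist v (x 0) := by
    rcases Nat.eq_zero_or_pos (G.dist v (x 0)) with h | h
    · exact absurd ((SimpleGraph.Reachable.dist_eq_zero_iff hreach).mp h) hne
    · exact h
  obtain ⟨p, hp⟩ := hreach.exists_walk_length_eq_dist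
  cases p with
  | nil => simp at hp; omega
  | cons h q =>
    rename_i u
    refine ⟨u, h.symm, ?_⟩
    have hfv : fS P x v = (G.dist v (x 0) : ℤ) := by rw [fS, if_neg hv]
    have hdu : G.dist u (x 0) ≤ G.dist v (x 0) - 1 := by
      have := SimpleGraph.dist_le q
      simp at hp
      omega
    by_cases hu : u ∈ stairSupportFrom P x 0
    · rw [fS, if_pos hu, hfv]
      have h1 : (0:ℤ) ≤ ((maxSegIdx P x u : ℤ) + 1) * n := by positivity
      have h2 : (0:ℤ) ≤ ((segSupport P x (maxSegIdx P x u)).idxOf u : ℤ) := by positivity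
      have : (0:ℤ) < (G.dist v (x 0) : ℤ) := by exact_mod_cast hdpos
      omega
    · rw [fS, if_neg hu, hfv]
      have : G.dist u (x 0) < G.dist v (x 0) := by omega
      exact_mod_cast this
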